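/- Let ρ = Σ_{x∈X} P(x)|x⟩⟨x|⊗ω(x) be a CQ state, Π = Σ_{x∈S}|x⟩⟨x| a projector onto a subset S ⊆ X, p = Tr(ΠρΠ) > 0, and τ = p⁻¹ΠρΠ the normalized projected state. Then the conditional min-entropy satisfies H_min(X|E)_τ ≥ H_min(X|E)_ρ + log₂ p. -/

import Mathlib

open Matrix Kronecker
open scoped BigOperators ComplexOrder

/-- A density operator: positive semidefinite with unit trace. -/
def IsDensity {n : Type*} [Fintype n] [DecidableEq n] (ρ : Matrix n n ℂ) : Prop :=
  ρ.PosSemidef ∧ ρ.trace = 1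

/-- A quantum channel (CPTP map) from system E to system X: trace preserving,
and completely positive (characterized by positive semidefiniteness of the Choi matrix). -/
def IsCPTP {E X : Type*} [Fintype E] [DecidableEq E] [Fintype X] [DecidableEq X]
    (Φ : Matrix E E ℂ →ₗ[ℂ] Matrix X X ℂ) : Prop :=
  (∀ M : Matrix E E ℂ, (Φ M).trace = M.trace) ∧
  (Matrix.of (fun p q : E × X =>
    (Φ (Matrix.single p.1 q.1 (1 : ℂ))) p.2 q.2)).PosSemidef

/-- Guessing probability of a CQ state ρ = Σ_x P(x)|x⟩⟨x|⊗ω(x):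
p_guess = sup over channels E of Σ_x P(x)⟨x|E[ω(x)]|x⟩. -/
noncomputable def pGuess {X E : Type*} [Fintype X] [DecidableEq X] [Fintype E] [DecidableEq E]
    (P : X → ℝ) (ω : X → Matrix E E ℂ) : ℝ :=
  ⨆ Φ : {Φ : Matrix E E ℂ →ₗ[ℂ] Matrix X X ℂ // IsCPTP Φ},
    ∑ x, P x * ((Φ.1 (ω x)) x x).re

/-- Conditional min-entropy of a CQ state, via 2^{-Hmin} = p_guess. -/
noncomputable def Hmin {X E : Type*} [Fintype X] [DecidableEq X] [Fintype E] [DecidableEq E]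
    (P : X → ℝ) (ω : X → Matrix E E ℂ) : ℝ :=
  - Real.logb 2 (pGuess P ω)

section Aux

variable {E X : Type*} [Fintype E] [DecidableEq E] [Fintype X] [DecidableEq X]

/-- Entrywise formula for a linear map on matrices in terms of its Choi matrix entries. -/
lemma linmap_apply_entry (Φ : Matrix E E ℂ →ₗ[ℂ] Matrix X X ℂ) (M : Matrix E E ℂ) (a b : X) :
    (Φ M) a b = ∑ i, ∑ j, M i j * (Φ (Matrix.single i j (1 : ℂ))) a b := by
  nth_rewrite 1 [Matrix.matrix_eq_sum_single M]
  rw [map_sum, Matrix.sum_apply]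
  refine Finset.sum_congr rfl fun i _ => ?_
  rw [map_sum, Matrix.sum_apply]
  refine Finset.sum_congr rfl fun j _ => ?_
  have h : Matrix.single i j (M i j) = M i j • Matrix.single i j (1 : ℂ) := by
    rw [Matrix.smul_single, smul_eq_mul, mul_one]
  rw [h, _root_.map_smul, Matrix.smul_apply, smul_eq_mul]

/-- Complete positivity (PSD Choi matrix) implies positivity of the quadratic form of the image
of a PSD matrix. -/
lemma cptp_quad_nonneg (Φ : Matrix E E ℂ →ₗ[ℂ] Matrix X X ℂ) (hΦ : IsCPTP Φ)
    {M : Matrix E E ℂ} (hM : M.PosSemidef) (w : X → ℂ) :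
    0 ≤ star w ⬝ᵥ (Φ M) *ᵥ w := by
  obtain ⟨A, rfl⟩ : ∃ A : Matrix E E ℂ, M = Aᴴ * A := by
    open scoped MatrixOrder in exact CStarAlgebra.nonneg_iff_eq_star_mul_self.mp hM.nonneg
  set C : Matrix (E × X) (E × X) ℂ := Matrix.of (fun p q : E × X =>
    (Φ (Matrix.single p.1 q.1 (1 : ℂ))) p.2 q.2) with hC
  have key : star w ⬝ᵥ (Φ (Aᴴ * A)) *ᵥ w
      = ∑ k : E, star (fun q : E × X => A k q.1 * w q.2) ⬝ᵥ
          C *ᵥ (fun q : E × X => A k q.1 * w q.2) := by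
    simp only [dotProduct, mulVec, Pi.star_apply, RCLike.star_def,
      linmap_apply_entry Φ (Aᴴ * A), Matrix.mul_apply, Matrix.conjTranspose_apply,
      Fintype.sum_prod_type, Finset.sum_mul, Finset.mul_sum, _root_.map_mul]
    -- reorder (a,b,i,j,k) → (k,i,a,j,b)
    conv_lhs => enter [2, a, 2, b, 2, i]; rw [Finset.sum_comm]  -- a b i k j
    conv_lhs => enter [2, a, 2, b]; rw [Finset.sum_comm]         -- a b k i j
    conv_lhs => enter [2, a]; rw [Finset.sum_comm]               -- a k b i j
    rw [Finset.sum_comm]                                         -- k a b i j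
    conv_lhs => enter [2, k, 2, a]; rw [Finset.sum_comm]         -- k a i b j
    conv_lhs => enter [2, k]; rw [Finset.sum_comm]               -- k i a b j
    conv_lhs => enter [2, k, 2, i, 2, a]; rw [Finset.sum_comm]   -- k i a j b
    refine Finset.sum_congr rfl fun k _ => Finset.sum_congr rfl fun i _ =>
      Finset.sum_congr rfl fun a _ => Finset.sum_congr rfl fun j _ =>
      Finset.sum_congr rfl fun b _ => ?_
    simp only [hC, Matrix.of_apply]
    ring
  rw [key]
  exact Finset.sum_nonneg fun k _ => hΦ.2.dotProduct_mulVec_nonneg _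


lemma cptp_diag_eq (Φ : Matrix E E ℂ →ₗ[ℂ] Matrix X X ℂ) (M : Matrix E E ℂ) (y : X) :
    star (Pi.single y 1 : X → ℂ) ⬝ᵥ (Φ M) *ᵥ (Pi.single y 1) = (Φ M) y y := by
  simp [dotProduct, mulVec, Pi.single_apply, mul_ite, ite_mul, Finset.sum_ite_eq,
    Finset.sum_ite_eq']

lemma cptp_diag_re_nonneg (Φ : Matrix E E ℂ →ₗ[ℂ] Matrix X X ℂ) (hΦ : IsCPTP Φ)
    {M : Matrix E E ℂ} (hM : M.PosSemidef) (y : X) : 0 ≤ ((Φ M) y y).re := by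
  have h := cptp_quad_nonneg Φ hΦ hM (Pi.single y 1)
  rw [cptp_diag_eq] at h
  exact (Complex.le_def.mp h).1

lemma cptp_diag_re_le_one (Φ : Matrix E E ℂ →ₗ[ℂ] Matrix X X ℂ) (hΦ : IsCPTP Φ)
    {M : Matrix E E ℂ} (hM : IsDensity M) (y : X) : ((Φ M) y y).re ≤ 1 := by
  have htr : ((Φ M).trace).re = 1 := by rw [hΦ.1 M, hM.2]; simp
  have : ∑ z : X, ((Φ M) z z).re = 1 := by
    rw [← htr, Matrix.trace]
    simp only [Matrix.diag_apply]
    exact (Complex.re_sum _ _).symm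
  calc ((Φ M) y y).re ≤ ∑ z : X, ((Φ M) z z).re :=
        Finset.single_le_sum (fun z _ => cptp_diag_re_nonneg Φ hΦ hM.1 z) (Finset.mem_univ y)
    _ = 1 := this

variable (E X) in
/-- The "discard and prepare |x0⟩⟨x0|" channel. -/
noncomputable def prepChannel (x0 : X) : Matrix E E ℂ →ₗ[ℂ] Matrix X X ℂ :=
  (Matrix.traceLinearMap E ℂ ℂ).smulRight (Matrix.single x0 x0 (1 : ℂ))

lemma prepChannel_apply (x0 : X) (M : Matrix E E ℂ) (a b : X) :
    (prepChannel E X x0) M a b = M.trace * (if x0 = a ∧ x0 = b then 1 else 0) := by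
  simp [prepChannel, Matrix.single, smul_eq_mul]

lemma trace_stdBasis (i j : E) :
    (Matrix.single i j (1 : ℂ)).trace = if i = j then 1 else 0 := by
  by_cases h : i = j
  · subst h; simp [Matrix.trace_single_eq_same]
  · rw [if_neg h]
    exact Matrix.trace_single_eq_of_ne i j (1 : ℂ) h

lemma prepChannel_cptp (x0 : X) : IsCPTP (prepChannel E X x0) := by
  constructor
  · intro M
    have h : ∀ a : X, (prepChannel E X x0) M a a = M.trace * (if x0 = a then 1 else 0) := by
      intro a; rw [prepChannel_apply]; simp
    rw [Matrix.trace]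
    simp [Matrix.diag_apply, h, mul_ite, Finset.sum_ite_eq]
  · refine Matrix.PosSemidef.of_dotProduct_mulVec_nonneg ?_ ?_
    · ext ⟨i, a⟩ ⟨j, b⟩
      simp only [Matrix.conjTranspose_apply, Matrix.of_apply, prepChannel_apply, trace_stdBasis]
      by_cases hij : i = j
      · subst hij
        by_cases ha : x0 = a <;> by_cases hb : x0 = b <;> simp [ha, hb]
      · have hji : ¬ j = i := fun h => hij h.symm
        simp [hij, hji]
    · intro v
      have hv : star v ⬝ᵥ (Matrix.of fun p q : E × X =>
          (prepChannel E X x0) (Matrix.single p.1 q.1 (1 : ℂ)) p.2 q.2) *ᵥ v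
          = ∑ i : E, star (v (i, x0)) * v (i, x0) := by
        simp only [dotProduct, mulVec, Matrix.of_apply, prepChannel_apply, trace_stdBasis,
          Fintype.sum_prod_type, Pi.star_apply]
        refine Finset.sum_congr rfl fun i _ => ?_
        simp [ite_and, mul_ite, ite_mul, Finset.sum_ite_eq, Finset.sum_ite_eq']
      rw [hv]
      exact Finset.sum_nonneg fun i _ => star_mul_self_nonneg _

lemma pGuess_bddAbove {Q : X → ℝ} (hQ : ∀ x, 0 ≤ Q x) {ω : X → Matrix E E ℂ}
    (hω : ∀ x, IsDensity (ω x)) :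
    BddAbove (Set.range fun Φ : {Φ : Matrix E E ℂ →ₗ[ℂ] Matrix X X ℂ // IsCPTP Φ} =>
      ∑ x, Q x * ((Φ.1 (ω x)) x x).re) := by
  refine ⟨∑ x, Q x, ?_⟩
  rintro r ⟨Φ, rfl⟩
  exact Finset.sum_le_sum fun x _ => by
    nlinarith [cptp_diag_re_le_one Φ.1 Φ.2 (hω x) x, cptp_diag_re_nonneg Φ.1 Φ.2 (hω x).1 x,
      hQ x]

lemma pGuess_ge (Q : X → ℝ) (hQ : ∀ x, 0 ≤ Q x) {ω : X → Matrix E E ℂ}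
    (hω : ∀ x, IsDensity (ω x)) (x0 : X) : Q x0 ≤ pGuess Q ω := by
  have hval : (∑ x, Q x * (((prepChannel E X x0) (ω x)) x x).re) = Q x0 := by
    have : ∀ x : X, (((prepChannel E X x0) (ω x)) x x).re = if x = x0 then 1 else 0 := by
      intro x
      rw [prepChannel_apply, (hω x).2]
      by_cases h : x = x0
      · simp [h]
      · rw [if_neg (fun hh : x0 = x ∧ x0 = x => h hh.1.symm), if_neg h]
        simp
    simp only [this, mul_ite, mul_one, mul_zero]
    simp [Finset.sum_ite_eq']
  calc Q x0 = ∑ x, Q x * (((prepChannel E X x0) (ω x)) x x).re := hval.symm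
    _ ≤ pGuess Q ω := le_ciSup (pGuess_bddAbove hQ hω) ⟨prepChannel E X x0, prepChannel_cptp x0⟩

end Aux

/-- Projecting a CQ state ρ = Σ_x P(x)|x⟩⟨x|⊗ω(x) onto Π = Σ_{x∈S}|x⟩⟨x| and
renormalizing by p = Tr(ΠρΠ) = Σ_{x∈S} P(x) > 0 yields τ with distribution
P'(x) = 1_{x∈S} P(x)/p.  Then H_min(X|E)_τ ≥ H_min(X|E)_ρ + log₂ p. -/
theorem hmin_projection {X E : Type*} [Fintype X] [DecidableEq X] [Fintype E] [DecidableEq E]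
    (P : X → ℝ) (hP : ∀ x, 0 ≤ P x) (hP1 : ∑ x, P x = 1)
    (ω : X → Matrix E E ℂ) (hω : ∀ x, IsDensity (ω x))
    (S : Finset X) (p : ℝ) (hp : p = ∑ x ∈ S, P x) (hppos : 0 < p)
    (P' : X → ℝ) (hP' : ∀ x, P' x = if x ∈ S then P x / p else 0) :
    Hmin P' ω ≥ Hmin P ω + Real.logb 2 p := by
  have hQ' : ∀ x, 0 ≤ P' x := by
    intro x; rw [hP' x]
    split
    · exact div_nonneg (hP x) hppos.le
    · exact le_refl 0
  obtain ⟨x0, hx0S, hx0pos⟩ : ∃ x0 ∈ S, 0 < P x0 := by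
    by_contra h
    push_neg at h
    have : ∑ x ∈ S, P x ≤ 0 := Finset.sum_nonpos h
    rw [← hp] at this
    linarith
  haveI : Nonempty {Φ : Matrix E E ℂ →ₗ[ℂ] Matrix X X ℂ // IsCPTP Φ} :=
    ⟨⟨prepChannel E X x0, prepChannel_cptp x0⟩⟩
  have hg : 0 < pGuess P ω := lt_of_lt_of_le hx0pos (pGuess_ge P hP hω x0)
  have hg' : 0 < pGuess P' ω := by
    refine lt_of_lt_of_le ?_ (pGuess_ge P' hQ' hω x0)
    rw [hP' x0, if_pos hx0S]
    exact div_pos hx0pos hppos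
  have hle : pGuess P' ω ≤ pGuess P ω / p := by
    unfold pGuess
    refine ciSup_le fun Φ => ?_
    have hterm : ∀ x, 0 ≤ ((Φ.1 (ω x)) x x).re :=
      fun x => cptp_diag_re_nonneg Φ.1 Φ.2 (hω x).1 x
    have h1 : ∑ x, P' x * ((Φ.1 (ω x)) x x).re
        = (∑ x ∈ S, P x * ((Φ.1 (ω x)) x x).re) / p := by
      simp only [hP', ite_mul, zero_mul]
      rw [Finset.sum_ite_mem, Finset.univ_inter, Finset.sum_div]
      exact Finset.sum_congr rfl fun x _ => by ring
    have h2 : ∑ x ∈ S, P x * ((Φ.1 (ω x)) x x).re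
        ≤ ∑ x, P x * ((Φ.1 (ω x)) x x).re :=
      Finset.sum_le_sum_of_subset_of_nonneg (Finset.subset_univ S)
        (fun x _ _ => mul_nonneg (hP x) (hterm x))
    have h3 : ∑ x, P x * ((Φ.1 (ω x)) x x).re ≤ pGuess P ω :=
      le_ciSup (pGuess_bddAbove hP hω) Φ
    rw [h1]
    gcongr
    exact h2.trans h3
  have hlog := Real.logb_le_logb_of_le (by norm_num : (1:ℝ) < 2) hg' hle
  rw [Real.logb_div (ne_of_gt hg) (ne_of_gt hppos)] at hlog
  unfold Hmin
  linarith
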